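/- arXiv:1107.3538 — 2 statements merged into one kernel-verified Lean document; each statement's English description precedes it below -/
import Mathlib

section
/- Let f = (1/√2)(1_{[0,1]} ⊗ 1_{[1,2]} + 1_{[1,2]} ⊗ 1_{[0,1]}) ∈ L²(ℝ₊²). Then (f ⌢_1 f) ⌢_1 f = (1/2) f and ⟨f ⌢_1 f, f⟩_{L²(ℝ₊²)} = 0. -/
open MeasureTheory

noncomputable section

/-- Lebesgue measure restricted to `ℝ₊`. -/
def ν : Measure ℝ := volume.restrict (Set.Ici (0 : ℝ))

/-- The first contraction of two kernels on `ℝ₊²`: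
`(f ⌢₁ g)(s,t) = ∫_{ℝ₊} f(s,x) g(x,t) dx`. -/
def c1 (f g : ℝ → ℝ → ℝ) : ℝ → ℝ → ℝ := fun s t => ∫ x, f s x * g x t ∂ν

/-- The kernel `f = (1/√2)(1_{[0,1]} ⊗ 1_{[1,2]} + 1_{[1,2]} ⊗ 1_{[0,1]})`. -/
def tetiKer : ℝ → ℝ → ℝ := fun s t =>
  (Real.sqrt 2)⁻¹ *
    (Set.indicator (Set.Icc (0:ℝ) 1) (fun _ => (1:ℝ)) s *
       Set.indicator (Set.Icc (1:ℝ) 2) (fun _ => (1:ℝ)) t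
     + Set.indicator (Set.Icc (1:ℝ) 2) (fun _ => (1:ℝ)) s *
       Set.indicator (Set.Icc (0:ℝ) 1) (fun _ => (1:ℝ)) t)

/- ## Auxiliary definitions and lemmas -/

instance : SFinite ν := by unfold ν; infer_instance

def iA : ℝ → ℝ := Set.indicator (Set.Icc (0:ℝ) 1) (fun _ => (1:ℝ))
def iB : ℝ → ℝ := Set.indicator (Set.Icc (1:ℝ) 2) (fun _ => (1:ℝ))

lemma tetiKer_eq (s t : ℝ) :
    tetiKer s t = (Real.sqrt 2)⁻¹ * (iA s * iB t + iB s * iA t) := rfl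

lemma ind_mul_eq (a b c d : ℝ) :
    (fun x => Set.indicator (Set.Icc a b) (fun _ => (1:ℝ)) x *
      Set.indicator (Set.Icc c d) (fun _ => (1:ℝ)) x)
    = Set.indicator (Set.Icc (max a c) (min b d)) (fun _ => (1:ℝ)) := by
  funext x
  simp only [← Set.Icc_inter_Icc, ← Set.inter_indicator_mul, one_mul]

lemma ind_integrable (a b c d : ℝ) :
    Integrable (fun x => Set.indicator (Set.Icc a b) (fun _ => (1:ℝ)) x *
      Set.indicator (Set.Icc c d) (fun _ => (1:ℝ)) x) ν := by
  rw [ind_mul_eq]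
  refine (integrableOn_const ?_).integrable_indicator measurableSet_Icc
  rw [ν, Measure.restrict_apply measurableSet_Icc]
  exact (lt_of_le_of_lt (measure_mono Set.inter_subset_left) (by simp [Real.volume_Icc])).ne

lemma ind_integral (a b c d : ℝ) :
    ∫ x, Set.indicator (Set.Icc a b) (fun _ => (1:ℝ)) x *
      Set.indicator (Set.Icc c d) (fun _ => (1:ℝ)) x ∂ν
    = (ν (Set.Icc (max a c) (min b d))).toReal := by
  rw [ind_mul_eq, integral_indicator_const _ measurableSet_Icc]
  simp
  rfl

lemma nu_Icc (a b : ℝ) (ha : 0 ≤ a) : ν (Set.Icc a b) = ENNReal.ofReal (b - a) := by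
  have h : Set.Icc a b ∩ Set.Ici 0 = Set.Icc a b :=
    Set.inter_eq_left.2 (fun x hx => le_trans ha hx.1)
  rw [ν, Measure.restrict_apply measurableSet_Icc, h, Real.volume_Icc]

lemma nu_singleton (a : ℝ) : ν ({a} : Set ℝ) = 0 := by
  rw [ν, Measure.restrict_apply (measurableSet_singleton a)]
  exact le_antisymm
    (le_trans (measure_mono Set.inter_subset_left) (by simp)) zero_le

lemma intAA : ∫ x, iA x * iA x ∂ν = 1 := by
  rw [iA, ind_integral]
  norm_num [nu_Icc 0 1 le_rfl]

lemma intBB : ∫ x, iB x * iB x ∂ν = 1 := by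
  rw [iB, ind_integral]
  norm_num [nu_Icc 1 2 zero_le_one]

lemma intAB : ∫ x, iA x * iB x ∂ν = 0 := by
  rw [iA, iB, ind_integral]
  norm_num [nu_singleton]

lemma intBA : ∫ x, iB x * iA x ∂ν = 0 := by
  rw [iA, iB, ind_integral]
  norm_num [nu_singleton]

lemma hc2 : (Real.sqrt 2)⁻¹ * (Real.sqrt 2)⁻¹ = 1/2 := by
  rw [← mul_inv, Real.mul_self_sqrt (by norm_num)]
  norm_num

lemma integral_four (k1 k2 k3 k4 : ℝ) (g1 g2 g3 g4 : ℝ → ℝ)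
    (h1 : Integrable g1 ν) (h2 : Integrable g2 ν)
    (h3 : Integrable g3 ν) (h4 : Integrable g4 ν) :
    ∫ x, (k1 * g1 x + (k2 * g2 x + (k3 * g3 x + k4 * g4 x))) ∂ν
    = k1 * (∫ x, g1 x ∂ν) + (k2 * (∫ x, g2 x ∂ν)
      + (k3 * (∫ x, g3 x ∂ν) + k4 * (∫ x, g4 x ∂ν))) := by
  have i34 : Integrable (fun x => k3 * g3 x + k4 * g4 x) ν :=
    (h3.const_mul _).add (h4.const_mul _)
  have i234 : Integrable (fun x => k2 * g2 x + (k3 * g3 x + k4 * g4 x)) ν :=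
    (h2.const_mul _).add i34
  rw [integral_add (h1.const_mul _) i234, integral_add (h2.const_mul _) i34,
    integral_add (h3.const_mul _) (h4.const_mul _),
    integral_const_mul, integral_const_mul, integral_const_mul, integral_const_mul]

lemma c1_self (s t : ℝ) :
    c1 tetiKer tetiKer s t = (1/2) * (iA s * iA t + iB s * iB t) := by
  rw [c1]
  have hfun : (fun x => tetiKer s x * tetiKer x t)
      = fun x =>
        ((Real.sqrt 2)⁻¹ * (Real.sqrt 2)⁻¹ * (iA s * iB t)) * (iB x * iA x)
        + (((Real.sqrt 2)⁻¹ * (Real.sqrt 2)⁻¹ * (iA s * iA t)) * (iB x * iB x)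
          + (((Real.sqrt 2)⁻¹ * (Real.sqrt 2)⁻¹ * (iB s * iB t)) * (iA x * iA x)
            + ((Real.sqrt 2)⁻¹ * (Real.sqrt 2)⁻¹ * (iB s * iA t)) * (iA x * iB x))) := by
    funext x
    rw [tetiKer_eq, tetiKer_eq]
    ring
  rw [hfun, integral_four _ _ _ _ _ _ _ _
      (show Integrable (fun x => iB x * iA x) ν from ind_integrable 1 2 0 1)
      (show Integrable (fun x => iB x * iB x) ν from ind_integrable 1 2 1 2)
      (show Integrable (fun x => iA x * iA x) ν from ind_integrable 0 1 0 1)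
      (show Integrable (fun x => iA x * iB x) ν from ind_integrable 0 1 1 2),
    intBA, intBB, intAA, intAB, hc2]
  ring

lemma iab (s : ℝ) (hs : s ≠ 1) : iA s * iB s = 0 := by
  by_cases h1 : s ∈ Set.Icc (0:ℝ) 1
  · have h2 : s ∉ Set.Icc (1:ℝ) 2 := fun h2 => hs (le_antisymm h1.2 h2.1)
    simp [iB, Set.indicator_of_notMem h2]
  · simp [iA, Set.indicator_of_notMem h1]

lemma c1_c1 (s t : ℝ) :
    c1 (c1 tetiKer tetiKer) tetiKer s t = (1/2) * tetiKer s t := by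
  rw [show c1 (c1 tetiKer tetiKer) tetiKer s t
      = ∫ x, c1 tetiKer tetiKer s x * tetiKer x t ∂ν from rfl]
  have hfun : (fun x => c1 tetiKer tetiKer s x * tetiKer x t)
      = fun x =>
        ((1/2) * (Real.sqrt 2)⁻¹ * (iA s * iB t)) * (iA x * iA x)
        + (((1/2) * (Real.sqrt 2)⁻¹ * (iA s * iA t)) * (iA x * iB x)
          + (((1/2) * (Real.sqrt 2)⁻¹ * (iB s * iB t)) * (iB x * iA x)
            + ((1/2) * (Real.sqrt 2)⁻¹ * (iB s * iA t)) * (iB x * iB x))) := by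
    funext x
    rw [c1_self, tetiKer_eq]
    ring
  rw [hfun, integral_four _ _ _ _ _ _ _ _
      (show Integrable (fun x => iA x * iA x) ν from ind_integrable 0 1 0 1)
      (show Integrable (fun x => iA x * iB x) ν from ind_integrable 0 1 1 2)
      (show Integrable (fun x => iB x * iA x) ν from ind_integrable 1 2 0 1)
      (show Integrable (fun x => iB x * iB x) ν from ind_integrable 1 2 1 2),
    intBA, intBB, intAA, intAB, tetiKer_eq]
  ring

lemma key_zero (s t : ℝ) (hs : s ≠ 1) (ht : t ≠ 1) :
    c1 tetiKer tetiKer s t * tetiKer s t = 0 := by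
  rw [c1_self, tetiKer_eq]
  have h := iab s hs
  have h' := iab t ht
  linear_combination ((1/2) * (Real.sqrt 2)⁻¹ * (iA s ^ 2 + iB s ^ 2)) * h'
    + ((1/2) * (Real.sqrt 2)⁻¹ * (iA t ^ 2 + iB t ^ 2)) * h

/-- For `f = (1/√2)(1_{[0,1]} ⊗ 1_{[1,2]} + 1_{[1,2]} ⊗ 1_{[0,1]})`, one has
`(f ⌢₁ f) ⌢₁ f = (1/2) f` in `L²(ℝ₊²)` and `⟨f ⌢₁ f, f⟩ = 0`. -/
theorem stmt4 :
    (∀ᵐ p ∂ ν.prod ν, c1 (c1 tetiKer tetiKer) tetiKer p.1 p.2 = (1/2) * tetiKer p.1 p.2)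
    ∧ (∫ p, c1 tetiKer tetiKer p.1 p.2 * tetiKer p.1 p.2 ∂ ν.prod ν) = 0 := by
  constructor
  · exact Filter.Eventually.of_forall fun p => c1_c1 p.1 p.2
  · have h1 : (ν.prod ν) (({1} : Set ℝ) ×ˢ (Set.univ : Set ℝ)) = 0 := by
      rw [Measure.prod_prod, nu_singleton, zero_mul]
    have h2 : (ν.prod ν) ((Set.univ : Set ℝ) ×ˢ ({1} : Set ℝ)) = 0 := by
      rw [Measure.prod_prod, nu_singleton, mul_zero]
    have hae : ∀ᵐ p ∂ν.prod ν,
        c1 tetiKer tetiKer p.1 p.2 * tetiKer p.1 p.2 = 0 := by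
      rw [ae_iff]
      refine measure_mono_null ?_ (measure_union_null h1 h2)
      intro p hp
      by_contra hc
      simp only [Set.mem_union, Set.mem_prod, Set.mem_singleton_iff, Set.mem_univ,
        and_true, true_and, not_or] at hc
      exact hp (key_zero p.1 p.2 hc.1 hc.2)
    exact integral_eq_zero_of_ae hae

end
end

section
/- Define sequences by the recursion S⁺₂ = 1, N⁺₃ = 1/2, and for m ≥ 2: S⁺_{2m} = N⁺_{2m−1} + Σ_{k=1}^{m−1} S⁺_{2k} S⁺_{2m−2k}, N⁺_{2m−1} = (1/2) S⁺_{2m−2} + Σ_{k=1}^{m−2} S⁺_{2k} N⁺_{2m−2k−1}; and S₂ = 1, N₃ = 1/2, S_{2m} = S_{2m−2} + N_{2m−1} + Σ_{k=1}^{m−1} S⁺_{2k} S_{2m−2k}, N_{2m−1} = (1/2) S_{2m−2} + Σ_{k=1}^{m−2} S⁺_{2k} N_{2m−2k−1}. Then S_{2m} = m_{2m}(𝒯) = (1/(2ᵐ m)) Σ_{k=1}^m 2^k · C(2m, k−1) · C(m, k) for every m ≥ 1. -/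
noncomputable def uu : ℕ → ℝ
  | 0 => 0
  | 1 => 1
  | (n+2) => (5/2) * uu (n+1)
      + 2 * ∑ k ∈ (Finset.range (n+2)).attach, uu k.1 * uu (n+1-k.1)
      + (1/2) * ∑ k ∈ (Finset.range (n+2)).attach, uu k.1 *
          ∑ j ∈ (Finset.range (n+2-k.1)).attach, uu j.1 * uu (n+1-k.1-j.1)
  decreasing_by
  all_goals first
    | omega
    | ((try have hk := Finset.mem_range.mp k.2); (try have hj := Finset.mem_range.mp j.2); omega)

open PowerSeries Finset

noncomputable def UU : ℝ⟦X⟧ := PowerSeries.mk uu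

lemma coeff_UU (n : ℕ) : PowerSeries.coeff (R := ℝ) n UU = uu n := PowerSeries.coeff_mk n uu

lemma constCoeff_UU : PowerSeries.constantCoeff (R := ℝ) UU = 0 := by
  simp [UU, PowerSeries.constantCoeff_mk, uu]

lemma coeff_sq (n : ℕ) : PowerSeries.coeff (R := ℝ) n (UU^2) =
    ∑ k ∈ Finset.range (n+1), uu k * uu (n-k) := by
  rw [pow_two, PowerSeries.coeff_mul, Finset.Nat.sum_antidiagonal_eq_sum_range_succ_mk]
  simp [coeff_UU]

lemma coeff_cube (n : ℕ) : PowerSeries.coeff (R := ℝ) n (UU^3) =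
    ∑ k ∈ Finset.range (n+1), uu k * ∑ j ∈ Finset.range (n+1-k), uu j * uu (n-k-j) := by
  rw [pow_succ, mul_comm, PowerSeries.coeff_mul, Finset.Nat.sum_antidiagonal_eq_sum_range_succ_mk]
  refine Finset.sum_congr rfl fun k hk => ?_
  rw [coeff_UU, coeff_sq]
  have : n - k + 1 = n + 1 - k := by
    have := Finset.mem_range.mp hk; omega
  rw [this]

lemma key2 : (2 : ℝ⟦X⟧) * UU = PowerSeries.X * (2 + 5*UU + 4*UU^2 + UU^3) := by
  ext n
  match n with
  | 0 =>
    rw [PowerSeries.coeff_zero_X_mul]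
    have : (2 : ℝ⟦X⟧) = PowerSeries.C (R := ℝ) 2 := (map_ofNat (PowerSeries.C (R := ℝ)) 2).symm
    rw [this, PowerSeries.coeff_C_mul, coeff_UU]
    simp [uu]
  | 1 =>
    have h2 : (2 : ℝ⟦X⟧) = PowerSeries.C (R := ℝ) 2 := (map_ofNat (PowerSeries.C (R := ℝ)) 2).symm
    have h5 : (5 : ℝ⟦X⟧) = PowerSeries.C (R := ℝ) 5 := (map_ofNat (PowerSeries.C (R := ℝ)) 5).symm
    have h4 : (4 : ℝ⟦X⟧) = PowerSeries.C (R := ℝ) 4 := (map_ofNat (PowerSeries.C (R := ℝ)) 4).symm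
    rw [h2, PowerSeries.coeff_C_mul, coeff_UU, PowerSeries.coeff_succ_X_mul]
    rw [map_add, map_add, map_add, h5, h4, PowerSeries.coeff_C_mul, PowerSeries.coeff_C_mul,
      coeff_UU, coeff_sq, coeff_cube]
    simp [uu]
  | (n+2) =>
    have h2 : (2 : ℝ⟦X⟧) = PowerSeries.C (R := ℝ) 2 := (map_ofNat (PowerSeries.C (R := ℝ)) 2).symm
    have h5 : (5 : ℝ⟦X⟧) = PowerSeries.C (R := ℝ) 5 := (map_ofNat (PowerSeries.C (R := ℝ)) 5).symm
    have h4 : (4 : ℝ⟦X⟧) = PowerSeries.C (R := ℝ) 4 := (map_ofNat (PowerSeries.C (R := ℝ)) 4).symm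
    rw [h2, PowerSeries.coeff_C_mul, coeff_UU, PowerSeries.coeff_succ_X_mul]
    rw [map_add, map_add, map_add, h5, h4, PowerSeries.coeff_C_mul, PowerSeries.coeff_C_mul,
      coeff_UU, coeff_sq, coeff_cube]
    have hcoeff2 : PowerSeries.coeff (R := ℝ) (n+1) (PowerSeries.C (R := ℝ) 2 * 1) = 0 := by
      simp [PowerSeries.coeff_one]
    show (2:ℝ) * uu (n+2) = PowerSeries.coeff (R := ℝ) (n+1) 2 + 5 * uu (n+1) + 4 * _ + _
    have : PowerSeries.coeff (R := ℝ) (n+1) (2 : ℝ⟦X⟧) = 0 := by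
      rw [h2]; simp [PowerSeries.coeff_C]
    rw [this]
    show (2:ℝ) * uu (n+2) = 0 + 5 * uu (n+1)
      + 4 * (∑ k ∈ Finset.range (n+2), uu k * uu (n+1-k))
      + (∑ k ∈ Finset.range (n+2), uu k * ∑ j ∈ Finset.range (n+2-k), uu j * uu (n+1-k-j))
    conv_lhs => rw [uu]
    rw [Finset.sum_attach (Finset.range (n+2)) (fun k => uu k * uu (n+1-k))]
    rw [Finset.sum_attach (Finset.range (n+2)) (fun k => uu k *
        ∑ j ∈ (Finset.range (n+2-k)).attach, uu j.1 * uu (n+1-k-j.1))]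
    have : ∀ k : ℕ, (∑ j ∈ (Finset.range (n+2-k)).attach, uu j.1 * uu (n+1-k-j.1))
        = ∑ j ∈ Finset.range (n+2-k), uu j * uu (n+1-k-j) := fun k =>
      Finset.sum_attach (Finset.range (n+2-k)) (fun j => uu j * uu (n+1-k-j))
    simp_rw [this]
    ring

noncomputable def phip : Polynomial ℝ :=
  (1 + Polynomial.C (1/2) * Polynomial.X) * (1 + Polynomial.X)^2

lemma algebraMap_eq_C (r : ℝ) : algebraMap ℝ ℝ⟦X⟧ r = PowerSeries.C (R := ℝ) r := rfl

lemma aeval_phip : Polynomial.aeval UU phip = (1 + PowerSeries.C (R := ℝ) (1/2) * UU) * (1 + UU)^2 := by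
  simp [phip, Polynomial.aeval_C, map_add, map_mul, map_pow, map_one, algebraMap_eq_C]

lemma masterE : UU = PowerSeries.X * Polynomial.aeval UU phip := by
  rw [aeval_phip]
  have h2 : (2 : ℝ⟦X⟧) ≠ 0 := by
    intro h
    have := congrArg (PowerSeries.constantCoeff (R := ℝ)) h
    rw [map_ofNat, map_zero] at this
    norm_num at this
  apply mul_left_cancel₀ h2
  have hC : (2 : ℝ⟦X⟧) * (PowerSeries.C (R := ℝ)) (1/2) = 1 := by
    rw [← map_ofNat (PowerSeries.C (R := ℝ)) 2, ← map_mul]; norm_num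
  calc (2:ℝ⟦X⟧) * UU = PowerSeries.X * (2 + 5*UU + 4*UU^2 + UU^3) := key2
    _ = PowerSeries.X * ((2 + (2 * PowerSeries.C (R := ℝ) (1/2))*UU) * (1 + UU)^2) := by
        rw [hC]; ring
    _ = 2 * (PowerSeries.X * ((1 + PowerSeries.C (R := ℝ) (1/2) * UU) * (1 + UU)^2)) := by ring

lemma X_dvd_UU : (PowerSeries.X : ℝ⟦X⟧) ∣ UU :=
  ⟨Polynomial.aeval UU phip, masterE⟩

lemma coeff_UU_pow_eq_zero {m i : ℕ} (h : m < i) : PowerSeries.coeff (R := ℝ) m (UU^i) = 0 := by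
  have : (PowerSeries.X : ℝ⟦X⟧)^i ∣ UU^i := pow_dvd_pow_of_dvd X_dvd_UU i
  exact PowerSeries.X_pow_dvd_iff.mp this m h

lemma phip_pow_coeff_zero (m : ℕ) : (phip^m).coeff 0 = 1 := by
  rw [Polynomial.coeff_zero_eq_eval_zero, Polynomial.eval_pow]
  have : phip.eval 0 = 1 := by simp [phip]
  rw [this, one_pow]

lemma lagrange : ∀ m : ℕ, 1 ≤ m → ∀ j : ℕ, 1 ≤ j →
    PowerSeries.coeff (R := ℝ) m (UU^j) =
      if j ≤ m then (j : ℝ)/(m : ℝ) * (phip^m).coeff (m-j) else 0 := by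
  intro m
  induction m using Nat.strong_induction_on with
  | _ m IH =>
    intro hm j hj
    by_cases hjm : j ≤ m
    swap
    · rw [if_neg hjm]
      exact coeff_UU_pow_eq_zero (by omega)
    rw [if_pos hjm]
    have hUj : UU^j = PowerSeries.X^j * Polynomial.aeval UU (phip^j) := by
      conv_lhs => rw [masterE]
      rw [mul_pow, map_pow]
    obtain ⟨d, rfl⟩ : ∃ d, m = d + j := ⟨m - j, by omega⟩
    have hmj : d + j - j = d := by omega
    rw [hmj]
    set N := max ((phip^j).natDegree + 1) (d+1) with hN
    have hdeg : (phip^j).natDegree < N := lt_of_lt_of_le (Nat.lt_succ_self _) (le_max_left _ _)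
    have hdN : d + 1 ≤ N := le_max_right _ _
    have hN1 : 1 ≤ N := by omega
    clear_value N
    rw [hUj, PowerSeries.coeff_X_pow_mul, Polynomial.aeval_eq_sum_range' hdeg, map_sum]
    simp_rw [map_smul]
    by_cases hdm : d = 0
    · subst hdm
      have hz : ∀ i ∈ Finset.range N, i ≠ 0 →
          (phip^j).coeff i • PowerSeries.coeff (R := ℝ) 0 (UU^i) = 0 := by
        intro i _ hi
        rw [PowerSeries.coeff_zero_eq_constantCoeff_apply, map_pow, constCoeff_UU,
          zero_pow hi, smul_zero]
      rw [Finset.sum_eq_single 0 hz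
        (fun h => absurd (Finset.mem_range.mpr (by omega)) h)]
      rw [pow_zero, phip_pow_coeff_zero, smul_eq_mul]
      have : PowerSeries.coeff (R := ℝ) 0 (1 : ℝ⟦X⟧) = 1 := by
        rw [PowerSeries.coeff_one, if_pos rfl]
      rw [this, phip_pow_coeff_zero]
      have hj0 : (j:ℝ) ≠ 0 := by positivity
      rw [Nat.zero_add, div_self hj0, one_mul]
    · have hd1 : 1 ≤ d := by omega
      have hterm : ∀ i ∈ Finset.range N,
          (phip^j).coeff i • PowerSeries.coeff (R := ℝ) d (UU^i) =
          if 1 ≤ i ∧ i ≤ d then (phip^j).coeff i * ((i:ℝ)/(d:ℝ) * (phip^d).coeff (d-i))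
          else 0 := by
        intro i _
        rcases Nat.eq_zero_or_pos i with h0 | h1
        · subst h0
          rw [if_neg (by omega), pow_zero, smul_eq_mul]
          have : PowerSeries.coeff (R := ℝ) d (1 : ℝ⟦X⟧) = 0 := by
            rw [PowerSeries.coeff_one, if_neg (by omega)]
          rw [this, mul_zero]
        · by_cases hid : i ≤ d
          · rw [if_pos ⟨h1, hid⟩, IH d (by omega) hd1 i h1, if_pos hid, smul_eq_mul]
          · rw [if_neg (by omega), coeff_UU_pow_eq_zero (by omega), smul_zero]
      rw [Finset.sum_congr rfl hterm]
      rw [Finset.sum_ite, Finset.sum_const_zero, add_zero]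
      have hfilter : Finset.filter (fun i => 1 ≤ i ∧ i ≤ d) (Finset.range N) =
          Finset.Icc 1 d := by
        ext i
        simp only [Finset.mem_filter, Finset.mem_range, Finset.mem_Icc]
        omega
      rw [hfilter]
      have hpoly : Polynomial.C ((d:ℝ)+j) * ((phip^j).derivative * phip^d) =
          Polynomial.C (j:ℝ) * (phip^(d+j)).derivative := by
        rw [Polynomial.derivative_pow phip j, Polynomial.derivative_pow phip (d+j)]
        have h1 : phip^(j-1) * phip^d = phip^(d+j-1) := by
          rw [← pow_add]; congr 1; omega
        have h2 : ((d+j : ℕ) : ℝ) = (d:ℝ) + j := by push_cast; ring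
        rw [h2]
        calc Polynomial.C ((d:ℝ)+j) * (Polynomial.C (j:ℝ) * phip^(j-1) * phip.derivative * phip^d)
            = Polynomial.C (j:ℝ) * (Polynomial.C ((d:ℝ)+j) * (phip^(j-1) * phip^d) * phip.derivative) := by ring
          _ = Polynomial.C (j:ℝ) * (Polynomial.C ((d:ℝ)+j) * phip^(d+j-1) * phip.derivative) := by rw [h1]
      have hco := congrArg (fun p => Polynomial.coeff p (d-1)) hpoly
      simp only [Polynomial.coeff_C_mul] at hco
      have hder : (phip^(d+j)).derivative.coeff (d-1) = (phip^(d+j)).coeff d * (d:ℝ) := by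
        rw [Polynomial.coeff_derivative]
        have h1 : d - 1 + 1 = d := by omega
        rw [h1, Nat.cast_sub hd1]
        push_cast
        ring
      have hprod : ((phip^j).derivative * phip^d).coeff (d-1) =
          ∑ i ∈ Finset.Icc 1 d, (phip^j).coeff i * ((i:ℝ) * (phip^d).coeff (d-i)) := by
        rw [Polynomial.coeff_mul, Finset.Nat.sum_antidiagonal_eq_sum_range_succ_mk]
        have hIcc : ∑ i ∈ Finset.Icc 1 d, (phip^j).coeff i * ((i:ℝ) * (phip^d).coeff (d-i))
            = ∑ k ∈ Finset.range (d + 1 - 1), (phip^j).coeff (1+k) * (((1+k:ℕ):ℝ) * (phip^d).coeff (d-(1+k))) := by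
          rw [← Finset.Ico_add_one_right_eq_Icc, Finset.sum_Ico_eq_sum_range, Nat.add_one_sub_one d]
        rw [hIcc]
        have hd' : (d-1).succ = d + 1 - 1 := by omega
        rw [hd']
        refine Finset.sum_congr rfl fun k hk => ?_
        have hk' : k < d := by
          have := Finset.mem_range.mp hk; omega
        simp only [Polynomial.coeff_derivative]
        have e1 : k + 1 = 1 + k := by omega
        have e2 : d - 1 - k = d - (1+k) := by omega
        rw [e1, e2]
        push_cast
        ring
      rw [hprod, hder] at hco
      have hdd0 : (d:ℝ) ≠ 0 := by
        have : 0 < d := hd1; positivity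
      have hm0 : (d:ℝ) + (j:ℝ) ≠ 0 := by positivity
      have goal_eq : ∑ i ∈ Finset.Icc 1 d, (phip^j).coeff i * ((i:ℝ)/(d:ℝ) * (phip^d).coeff (d-i))
          = (1/(d:ℝ)) * ∑ i ∈ Finset.Icc 1 d, (phip^j).coeff i * ((i:ℝ) * (phip^d).coeff (d-i)) := by
        rw [Finset.mul_sum]
        refine Finset.sum_congr rfl fun i _ => ?_
        field_simp
      rw [goal_eq]
      have hsum : ∑ i ∈ Finset.Icc 1 d, (phip^j).coeff i * ((i:ℝ) * (phip^d).coeff (d-i))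
          = (j:ℝ) * ((phip^(d+j)).coeff d * d) / ((d:ℝ)+j) := by
        field_simp at hco ⊢
        linarith [hco]
      rw [hsum]
      have hcast : ((d + j : ℕ) : ℝ) = (d:ℝ) + j := by push_cast; ring
      rw [hcast]
      field_simp

lemma coeff_one_add_half_X_pow (n k : ℕ) :
    ((1 + Polynomial.C (1/2:ℝ) * Polynomial.X)^n).coeff k = (1/2:ℝ)^k * n.choose k := by
  have hC : (Polynomial.C (1/2:ℝ)) * Polynomial.C 2 = 1 := by
    rw [← map_mul]; norm_num
  have h : (1 + Polynomial.C (1/2:ℝ) * Polynomial.X) =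
      Polynomial.C (1/2) * (Polynomial.X + Polynomial.C 2) := by
    rw [mul_add, hC]; ring
  rw [h, mul_pow, ← map_pow, Polynomial.coeff_C_mul, Polynomial.coeff_X_add_C_pow]
  by_cases hk : k ≤ n
  · have : (1/2:ℝ)^n = (1/2)^k * (1/2)^(n-k) := by
      rw [← pow_add]; congr 1; omega
    rw [this]
    have h2 : ((2:ℝ))^(n-k) * ((1/2):ℝ)^(n-k) = 1 := by
      rw [← mul_pow]; norm_num
    calc (1/2:ℝ)^k * (1/2)^(n-k) * ((2:ℝ)^(n-k) * n.choose k)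
        = (1/2:ℝ)^k * n.choose k * ((2:ℝ)^(n-k) * ((1/2):ℝ)^(n-k)) := by ring
      _ = (1/2:ℝ)^k * n.choose k := by rw [h2, mul_one]
  · rw [Nat.choose_eq_zero_of_lt (by omega)]
    norm_num

lemma phip_pow_eq (m : ℕ) : phip^m =
    (1 + Polynomial.C (1/2:ℝ) * Polynomial.X)^m * (1 + Polynomial.X)^(2*m) := by
  rw [phip, mul_pow, ← pow_mul]

lemma phip_pow_coeff (m a : ℕ) : (phip^m).coeff a =
    ∑ i ∈ Finset.range (a+1), (1/2:ℝ)^i * (m.choose i) * ((2*m).choose (a-i)) := by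
  rw [phip_pow_eq, Polynomial.coeff_mul, Finset.Nat.sum_antidiagonal_eq_sum_range_succ_mk]
  refine Finset.sum_congr rfl fun i _ => ?_
  rw [coeff_one_add_half_X_pow, Polynomial.coeff_one_add_X_pow]

lemma uu_closed (m : ℕ) (hm : 1 ≤ m) : uu m =
    (1 / (2 ^ m * (m : ℝ))) *
      ∑ k ∈ Finset.Icc 1 m, (2:ℝ)^k * ((2*m).choose (k-1)) * (m.choose k) := by
  have hl := lagrange m hm 1 le_rfl
  rw [pow_one, coeff_UU, if_pos hm] at hl
  rw [hl, phip_pow_coeff]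
  have hm1 : m - 1 + 1 = m := by omega
  rw [hm1]
  -- turn Icc sum into range sum
  have hIcc : ∑ k ∈ Finset.Icc 1 m, (2:ℝ)^k * ((2*m).choose (k-1)) * (m.choose k)
      = ∑ i ∈ Finset.range m, (2:ℝ)^(1+i) * ((2*m).choose (1+i-1)) * (m.choose (1+i)) := by
    rw [← Finset.Ico_add_one_right_eq_Icc, Finset.sum_Ico_eq_sum_range, Nat.add_one_sub_one m]
  rw [hIcc]
  rw [← Finset.sum_range_reflect (fun i => (2:ℝ)^(1+i) * ((2*m).choose (1+i-1)) * (m.choose (1+i))) m]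
  rw [Finset.mul_sum, Finset.mul_sum]
  refine Finset.sum_congr rfl fun i hi => ?_
  have hi' : i < m := Finset.mem_range.mp hi
  have e1 : 1 + (m - 1 - i) - 1 = m - 1 - i := by omega
  have e2 : 1 + (m - 1 - i) = m - i := by omega
  have e3 : m - 1 - i = m - (i+1) := by omega
  rw [e1, e2]
  have e4 : m.choose (m - i) = m.choose i := Nat.choose_symm (le_of_lt hi')
  rw [e4]
  have hp : (2:ℝ)^(m-i) * 2^i = 2^m := by rw [← pow_add]; congr 1; omega
  have hm0 : (m:ℝ) ≠ 0 := by positivity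
  have h2i : (2:ℝ)^i ≠ 0 := by positivity
  have h2m : (2:ℝ)^m ≠ 0 := by positivity
  rw [div_pow, one_pow]
  field_simp
  rw [← hp]
  ring

noncomputable def FF : ℝ⟦X⟧ := PowerSeries.X * ((1 + PowerSeries.C (R := ℝ) (1/2) * UU) * (1 + UU))
noncomputable def GG : ℝ⟦X⟧ := PowerSeries.C (R := ℝ) (1/2) * (PowerSeries.X * UU)
noncomputable def KK : ℝ⟦X⟧ := PowerSeries.C (R := ℝ) (1/2) * (PowerSeries.X * (UU * (1 + UU)))

lemma E' : FF * (1 + UU) = UU := by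
  rw [FF]
  conv_rhs => rw [masterE, aeval_phip]
  ring

lemma one_add_UU_sq_ne : ((1 + UU)^2 : ℝ⟦X⟧) ≠ 0 := by
  intro h
  have := congrArg (PowerSeries.constantCoeff (R := ℝ)) h
  rw [map_pow, map_add, map_one, constCoeff_UU, map_zero] at this
  norm_num at this

lemma idSp : FF = PowerSeries.X + GG + FF^2 := by
  apply mul_right_cancel₀ one_add_UU_sq_ne
  have h1 : (PowerSeries.X + GG) * (1+UU)^2 = UU := by
    rw [GG]
    conv_rhs => rw [masterE, aeval_phip]
    ring
  have h2 : FF * (1+UU)^2 - FF^2 * (1+UU)^2 = UU := by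
    calc FF * (1+UU)^2 - FF^2 * (1+UU)^2
        = (FF * (1+UU)) * (1+UU) - (FF*(1+UU))^2 := by ring
      _ = UU * (1+UU) - UU^2 := by rw [E']
      _ = UU := by ring
  have := h2.trans h1.symm
  linear_combination this

lemma idNp : GG = PowerSeries.C (R := ℝ) (1/2) * (PowerSeries.X * FF) + FF * GG := by
  have : PowerSeries.C (R := ℝ) (1/2) * (PowerSeries.X * FF) + FF * GG
      = PowerSeries.C (R := ℝ) (1/2) * (PowerSeries.X * (FF * (1 + UU))) := by
    rw [GG]; ring
  rw [this, E', GG]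

lemma idN : KK = PowerSeries.C (R := ℝ) (1/2) * (PowerSeries.X * UU) + FF * KK := by
  have h : FF * KK = PowerSeries.C (R := ℝ) (1/2) * (PowerSeries.X * (UU * (FF * (1+UU)))) := by
    rw [KK]; ring
  rw [h, E', KK]
  ring

lemma idS : UU = PowerSeries.X + PowerSeries.X * UU + KK + FF * UU := by
  have h : FF * UU = FF * (1 + UU) - FF := by ring
  rw [h, E', KK, FF]
  ring

lemma uu0 : uu 0 = 0 := by simp [uu]
lemma uu1 : uu 1 = 1 := by simp [uu]

lemma ccUU : PowerSeries.constantCoeff (R := ℝ) UU = 0 := constCoeff_UU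
lemma ccFF : PowerSeries.constantCoeff (R := ℝ) FF = 0 := by
  rw [FF, map_mul, PowerSeries.constantCoeff_X, zero_mul]
lemma ccGG : PowerSeries.constantCoeff (R := ℝ) GG = 0 := by
  rw [GG, map_mul, map_mul, PowerSeries.constantCoeff_X, zero_mul, mul_zero]
lemma ccKK : PowerSeries.constantCoeff (R := ℝ) KK = 0 := by
  rw [KK, map_mul, map_mul, PowerSeries.constantCoeff_X, zero_mul, mul_zero]

lemma coeff_mul_Icc (A B : ℝ⟦X⟧) (hA : PowerSeries.constantCoeff (R := ℝ) A = 0)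
    (hB : PowerSeries.constantCoeff (R := ℝ) B = 0) (n : ℕ) :
    PowerSeries.coeff (R := ℝ) n (A * B) =
      ∑ k ∈ Finset.Icc 1 (n-1), PowerSeries.coeff (R := ℝ) k A * PowerSeries.coeff (R := ℝ) (n-k) B := by
  rw [PowerSeries.coeff_mul, Finset.Nat.sum_antidiagonal_eq_sum_range_succ_mk]
  symm
  apply Finset.sum_subset
  · intro k hk
    simp only [Finset.mem_Icc] at hk
    simp only [Finset.mem_range]
    omega
  · intro k hk hk'
    simp only [Finset.mem_range] at hk
    simp only [Finset.mem_Icc, not_and_or, not_le] at hk'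
    rcases hk' with h | h
    · have : k = 0 := by omega
      subst this
      rw [PowerSeries.coeff_zero_eq_constantCoeff_apply, hA, zero_mul]
    · have : n - k = 0 := by omega
      rw [this, PowerSeries.coeff_zero_eq_constantCoeff_apply, hB, mul_zero]

lemma coeff1UU : PowerSeries.coeff (R := ℝ) 1 UU = 1 := by rw [coeff_UU, uu1]

lemma coeff1FF : PowerSeries.coeff (R := ℝ) 1 FF = 1 := by
  rw [FF, show (1:ℕ) = 0 + 1 from rfl, PowerSeries.coeff_succ_X_mul,
    PowerSeries.coeff_zero_eq_constantCoeff_apply]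
  simp [constCoeff_UU, uu0]

lemma coeffGG (n : ℕ) : PowerSeries.coeff (R := ℝ) (n+1) GG = (1/2) * uu n := by
  rw [GG, PowerSeries.coeff_C_mul, PowerSeries.coeff_succ_X_mul, coeff_UU]

lemma coeff1GG : PowerSeries.coeff (R := ℝ) 1 GG = 0 := by
  rw [show (1:ℕ) = 0 + 1 from rfl, coeffGG, uu0]
  ring

lemma coeffKK (n : ℕ) : PowerSeries.coeff (R := ℝ) (n+1) KK =
    (1/2) * (uu n + PowerSeries.coeff (R := ℝ) n (UU^2)) := by
  rw [KK, PowerSeries.coeff_C_mul, PowerSeries.coeff_succ_X_mul]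
  have : UU * (1 + UU) = UU + UU^2 := by ring
  rw [this, map_add, coeff_UU]

lemma coeff1KK : PowerSeries.coeff (R := ℝ) 1 KK = 0 := by
  rw [show (1:ℕ) = 0 + 1 from rfl, coeffKK, coeff_sq]
  simp [uu0]

lemma coeff2GG : PowerSeries.coeff (R := ℝ) 2 GG = 1/2 := by
  rw [show (2:ℕ) = 1 + 1 from rfl, coeffGG, uu1]
  norm_num

lemma coeff2KK : PowerSeries.coeff (R := ℝ) 2 KK = 1/2 := by
  rw [show (2:ℕ) = 1 + 1 from rfl, coeffKK, coeff_sq]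
  have : ∑ k ∈ Finset.range 2, uu k * uu (1-k) = 0 := by
    rw [Finset.sum_range_succ, Finset.sum_range_one]
    show uu 0 * uu 1 + uu 1 * uu 0 = 0
    rw [uu0]
    ring
  rw [this, uu1]
  norm_num

lemma recNp (n : ℕ) : PowerSeries.coeff (R := ℝ) (n+2) GG =
    (1/2) * PowerSeries.coeff (R := ℝ) (n+1) FF +
      ∑ k ∈ Finset.Icc 1 n, PowerSeries.coeff (R := ℝ) k FF * PowerSeries.coeff (R := ℝ) (n+2-k) GG := by
  conv_lhs => rw [idNp]
  rw [map_add, PowerSeries.coeff_C_mul, PowerSeries.coeff_succ_X_mul,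
    coeff_mul_Icc FF GG ccFF ccGG]
  congr 1
  rw [show (n+2-1) = n+1 by omega, ← Finset.Ico_add_one_right_eq_Icc, ← Finset.Ico_add_one_right_eq_Icc,
    Finset.sum_Ico_succ_top (by omega : 1 ≤ n+1)]
  rw [show (n+2-(n+1)) = 1 by omega, coeff1GG, mul_zero, add_zero]

lemma recN (n : ℕ) : PowerSeries.coeff (R := ℝ) (n+2) KK =
    (1/2) * PowerSeries.coeff (R := ℝ) (n+1) UU +
      ∑ k ∈ Finset.Icc 1 n, PowerSeries.coeff (R := ℝ) k FF * PowerSeries.coeff (R := ℝ) (n+2-k) KK := by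
  conv_lhs => rw [idN]
  rw [map_add, PowerSeries.coeff_C_mul, PowerSeries.coeff_succ_X_mul,
    coeff_mul_Icc FF KK ccFF ccKK]
  congr 1
  rw [show (n+2-1) = n+1 by omega, ← Finset.Ico_add_one_right_eq_Icc, ← Finset.Ico_add_one_right_eq_Icc,
    Finset.sum_Ico_succ_top (by omega : 1 ≤ n+1)]
  rw [show (n+2-(n+1)) = 1 by omega, coeff1KK, mul_zero, add_zero]

lemma recSp (n : ℕ) : PowerSeries.coeff (R := ℝ) (n+2) FF =
    PowerSeries.coeff (R := ℝ) (n+2) GG +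
      ∑ k ∈ Finset.Icc 1 (n+1), PowerSeries.coeff (R := ℝ) k FF * PowerSeries.coeff (R := ℝ) (n+2-k) FF := by
  conv_lhs => rw [idSp]
  rw [map_add, map_add, pow_two, coeff_mul_Icc FF FF ccFF ccFF]
  rw [show (n+2-1) = n+1 by omega, PowerSeries.coeff_X, if_neg (by omega)]
  ring

lemma recS (n : ℕ) : PowerSeries.coeff (R := ℝ) (n+2) UU =
    PowerSeries.coeff (R := ℝ) (n+1) UU + PowerSeries.coeff (R := ℝ) (n+2) KK +
      ∑ k ∈ Finset.Icc 1 (n+1), PowerSeries.coeff (R := ℝ) k FF * PowerSeries.coeff (R := ℝ) (n+2-k) UU := by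
  conv_lhs => rw [idS]
  rw [map_add, map_add, map_add, coeff_mul_Icc FF UU ccFF ccUU,
    PowerSeries.coeff_succ_X_mul, PowerSeries.coeff_X, if_neg (by omega)]
  rw [show (n+2-1) = n+1 by omega]
  ring



/-- Proposition 2.8: the sequences defined by the recursion
`S⁺₂ = 1`, `N⁺₃ = 1/2`, and for `m ≥ 2`
`S⁺_{2m} = N⁺_{2m-1} + Σ_{k=1}^{m-1} S⁺_{2k} S⁺_{2m-2k}`,
`N⁺_{2m-1} = (1/2) S⁺_{2m-2} + Σ_{k=1}^{m-2} S⁺_{2k} N⁺_{2m-2k-1}`,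
together with `S₂ = 1`, `N₃ = 1/2`,
`S_{2m} = S_{2m-2} + N_{2m-1} + Σ_{k=1}^{m-1} S⁺_{2k} S_{2m-2k}`,
`N_{2m-1} = (1/2) S_{2m-2} + Σ_{k=1}^{m-2} S⁺_{2k} N_{2m-2k-1}`,
satisfy `S_{2m} = m_{2m}(𝒯) = (1/(2ᵐ m)) Σ_{k=1}^{m} 2ᵏ C(2m,k-1) C(m,k)` for all `m ≥ 1`. -/
theorem stmt18 (S Sp N Np : ℕ → ℝ)
    (hSp2 : Sp 2 = 1) (hNp3 : Np 3 = 1/2) (hS2 : S 2 = 1) (hN3 : N 3 = 1/2)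
    (hSp : ∀ m : ℕ, 2 ≤ m →
      Sp (2*m) = Np (2*m-1) + ∑ k ∈ Finset.Icc 1 (m-1), Sp (2*k) * Sp (2*m-2*k))
    (hNp : ∀ m : ℕ, 2 ≤ m →
      Np (2*m-1) = (1/2) * Sp (2*m-2) + ∑ k ∈ Finset.Icc 1 (m-2), Sp (2*k) * Np (2*m-2*k-1))
    (hS : ∀ m : ℕ, 2 ≤ m →
      S (2*m) = S (2*m-2) + N (2*m-1) + ∑ k ∈ Finset.Icc 1 (m-1), Sp (2*k) * S (2*m-2*k))
    (hN : ∀ m : ℕ, 2 ≤ m →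
      N (2*m-1) = (1/2) * S (2*m-2) + ∑ k ∈ Finset.Icc 1 (m-2), Sp (2*k) * N (2*m-2*k-1)) :
    ∀ m : ℕ, 1 ≤ m →
      S (2*m) = (1 / (2 ^ m * (m : ℝ))) *
        ∑ k ∈ Finset.Icc 1 m,
          (2 : ℝ) ^ k * (Nat.choose (2*m) (k-1)) * (Nat.choose m k) := by
  have main : ∀ m : ℕ, 1 ≤ m →
      (S (2*m) = PowerSeries.coeff (R := ℝ) m UU ∧ Sp (2*m) = PowerSeries.coeff (R := ℝ) m FF) ∧
      (2 ≤ m → N (2*m-1) = PowerSeries.coeff (R := ℝ) m KK ∧ Np (2*m-1) = PowerSeries.coeff (R := ℝ) m GG) := by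
    intro m
    induction m using Nat.strong_induction_on with
    | _ m IH =>
      intro hm
      match m with
      | 1 =>
        refine ⟨⟨?_, ?_⟩, fun h => absurd h (by omega)⟩
        · rw [show 2*1 = 2 from rfl, hS2, coeff1UU]
        · rw [show 2*1 = 2 from rfl, hSp2, coeff1FF]
      | 2 =>
        have base1 : S 2 = PowerSeries.coeff (R := ℝ) 1 UU ∧ Sp 2 = PowerSeries.coeff (R := ℝ) 1 FF := by
          constructor
          · rw [hS2, coeff1UU]
          · rw [hSp2, coeff1FF]
        have hnp2 : Np (2*2-1) = PowerSeries.coeff (R := ℝ) 2 GG := by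
          rw [show 2*2-1 = 3 from rfl, hNp3, coeff2GG]
        have hn2 : N (2*2-1) = PowerSeries.coeff (R := ℝ) 2 KK := by
          rw [show 2*2-1 = 3 from rfl, hN3, coeff2KK]
        refine ⟨⟨?_, ?_⟩, fun _ => ⟨hn2, hnp2⟩⟩
        · have h := hS 2 le_rfl
          rw [show 2*2-2 = 2 from rfl, base1.1,
            show (2:ℕ)-1 = 1 from rfl] at h
          rw [h, hn2]
          have hsum : ∑ k ∈ Finset.Icc 1 1, Sp (2*k) * S (2*2-2*k)
              = ∑ k ∈ Finset.Icc 1 1, PowerSeries.coeff (R := ℝ) k FF * PowerSeries.coeff (R := ℝ) (2-k) UU := by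
            refine Finset.sum_congr rfl fun k hk => ?_
            have hk1 : k = 1 := by
              have := Finset.mem_Icc.mp hk; omega
            subst hk1
            show Sp 2 * S 2 = PowerSeries.coeff (R := ℝ) 1 FF * PowerSeries.coeff (R := ℝ) 1 UU
            rw [base1.2, base1.1]
          rw [hsum, recS 0]
        · have h := hSp 2 le_rfl
          rw [show (2:ℕ)-1 = 1 from rfl, hnp2] at h
          rw [h]
          have hsum : ∑ k ∈ Finset.Icc 1 1, Sp (2*k) * Sp (2*2-2*k)
              = ∑ k ∈ Finset.Icc 1 1, PowerSeries.coeff (R := ℝ) k FF * PowerSeries.coeff (R := ℝ) (2-k) FF := by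
            refine Finset.sum_congr rfl fun k hk => ?_
            have hk1 : k = 1 := by
              have := Finset.mem_Icc.mp hk; omega
            subst hk1
            show Sp 2 * Sp 2 = PowerSeries.coeff (R := ℝ) 1 FF * PowerSeries.coeff (R := ℝ) 1 FF
            rw [base1.2]
          rw [hsum, recSp 0]
      | (n+3) =>
        -- set m = n+3, so previous indices go up to n+2; use nn := n+1 in rec lemmas (n+3 = nn+2)
        have IH1 : ∀ k, 1 ≤ k → k ≤ n+2 →
            S (2*k) = PowerSeries.coeff (R := ℝ) k UU ∧ Sp (2*k) = PowerSeries.coeff (R := ℝ) k FF :=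
          fun k h1 h2 => (IH k (by omega) h1).1
        have IH2 : ∀ k, 2 ≤ k → k ≤ n+2 →
            N (2*k-1) = PowerSeries.coeff (R := ℝ) k KK ∧ Np (2*k-1) = PowerSeries.coeff (R := ℝ) k GG :=
          fun k h2 h3 => (IH k (by omega) (by omega)).2 h2
        have hnp : Np (2*(n+3)-1) = PowerSeries.coeff (R := ℝ) (n+3) GG := by
          have h := hNp (n+3) (by omega)
          rw [show 2*(n+3)-2 = 2*(n+2) by omega, show (n+3)-2 = n+1 by omega,
            (IH1 (n+2) (by omega) le_rfl).2] at h
          have hsum : ∑ k ∈ Finset.Icc 1 (n+1), Sp (2*k) * Np (2*(n+3)-2*k-1)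
              = ∑ k ∈ Finset.Icc 1 (n+1),
                  PowerSeries.coeff (R := ℝ) k FF * PowerSeries.coeff (R := ℝ) (n+3-k) GG := by
            refine Finset.sum_congr rfl fun k hk => ?_
            obtain ⟨hk1, hk2⟩ := Finset.mem_Icc.mp hk
            rw [(IH1 k hk1 (by omega)).2, show 2*(n+3)-2*k-1 = 2*(n+3-k)-1 by omega,
              (IH2 (n+3-k) (by omega) (by omega)).2]
          rw [hsum] at h
          rw [h, recNp (n+1)]
        have hn : N (2*(n+3)-1) = PowerSeries.coeff (R := ℝ) (n+3) KK := by
          have h := hN (n+3) (by omega)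
          rw [show 2*(n+3)-2 = 2*(n+2) by omega, show (n+3)-2 = n+1 by omega,
            (IH1 (n+2) (by omega) le_rfl).1] at h
          have hsum : ∑ k ∈ Finset.Icc 1 (n+1), Sp (2*k) * N (2*(n+3)-2*k-1)
              = ∑ k ∈ Finset.Icc 1 (n+1),
                  PowerSeries.coeff (R := ℝ) k FF * PowerSeries.coeff (R := ℝ) (n+3-k) KK := by
            refine Finset.sum_congr rfl fun k hk => ?_
            obtain ⟨hk1, hk2⟩ := Finset.mem_Icc.mp hk
            rw [(IH1 k hk1 (by omega)).2, show 2*(n+3)-2*k-1 = 2*(n+3-k)-1 by omega,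
              (IH2 (n+3-k) (by omega) (by omega)).1]
          rw [hsum] at h
          rw [h, recN (n+1)]
        have hsp : Sp (2*(n+3)) = PowerSeries.coeff (R := ℝ) (n+3) FF := by
          have h := hSp (n+3) (by omega)
          rw [hnp, show (n+3)-1 = n+2 by omega] at h
          have hsum : ∑ k ∈ Finset.Icc 1 (n+2), Sp (2*k) * Sp (2*(n+3)-2*k)
              = ∑ k ∈ Finset.Icc 1 (n+2),
                  PowerSeries.coeff (R := ℝ) k FF * PowerSeries.coeff (R := ℝ) (n+3-k) FF := by
            refine Finset.sum_congr rfl fun k hk => ?_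
            obtain ⟨hk1, hk2⟩ := Finset.mem_Icc.mp hk
            rw [(IH1 k hk1 (by omega)).2, show 2*(n+3)-2*k = 2*(n+3-k) by omega,
              (IH1 (n+3-k) (by omega) (by omega)).2]
          rw [hsum] at h
          rw [h, recSp (n+1)]
        have hs : S (2*(n+3)) = PowerSeries.coeff (R := ℝ) (n+3) UU := by
          have h := hS (n+3) (by omega)
          rw [hn, show 2*(n+3)-2 = 2*(n+2) by omega, show (n+3)-1 = n+2 by omega,
            (IH1 (n+2) (by omega) le_rfl).1] at h
          have hsum : ∑ k ∈ Finset.Icc 1 (n+2), Sp (2*k) * S (2*(n+3)-2*k)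
              = ∑ k ∈ Finset.Icc 1 (n+2),
                  PowerSeries.coeff (R := ℝ) k FF * PowerSeries.coeff (R := ℝ) (n+3-k) UU := by
            refine Finset.sum_congr rfl fun k hk => ?_
            obtain ⟨hk1, hk2⟩ := Finset.mem_Icc.mp hk
            rw [(IH1 k hk1 (by omega)).2, show 2*(n+3)-2*k = 2*(n+3-k) by omega,
              (IH1 (n+3-k) (by omega) (by omega)).1]
          rw [hsum] at h
          rw [h, recS (n+1)]
        exact ⟨⟨hs, hsp⟩, fun _ => ⟨hn, hnp⟩⟩
  intro m hm
  rw [(main m hm).1.1, coeff_UU, uu_closed m hm]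
end
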